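/- arXiv:1803.08254 — 2 statements merged into one kernel-verified Lean document; each statement's English description precedes it below -/
import Mathlib

section
/- Observability at one endpoint in the sharp time: if T ≥ T_ℓ where T_ℓ = (αβ − 1)·t₀ = 2L₀/((1−ℓ₁)(1−ℓ₂)), then E(t₀) ≤ (αβ(1−ℓ₂²)²/(4(1−L)))·∫_{t₀}^{t₀+T} φₓ(ℓ₂t, t)² dt, where L = max{ℓ₁,ℓ₂}. -/
open MeasureTheory

namespace ObsAux

noncomputable def A (c : ℤ → ℂ) (κ : ℝ) (s : ℝ) (n : ℤ) : ℂ :=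
  c n * Complex.exp (Complex.I * n * Real.pi * κ * Real.log s) / (s : ℂ)

noncomputable def FC (c : ℤ → ℂ) (κ : ℝ) (s : ℝ) : ℂ :=
  Complex.I * Real.pi * κ * ∑' n : ℤ, (n : ℂ) * A c κ s n

noncomputable def F (c : ℤ → ℂ) (κ : ℝ) (s : ℝ) : ℝ := (FC c κ s).re

lemma norm_nA (c : ℤ → ℂ) (κ : ℝ) {s : ℝ} (hs : 0 < s) (n : ℤ) :
    ‖(n : ℂ) * A c κ s n‖ = ‖(n : ℂ) * c n‖ / s := by
  have h : Complex.I * n * Real.pi * κ * Real.log s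
      = ((n * Real.pi * κ * Real.log s : ℝ) : ℂ) * Complex.I := by
    push_cast; ring
  rw [A, h, mul_div_assoc' ]
  rw [norm_div, norm_mul, mul_assoc, norm_mul, Complex.norm_exp_ofReal_mul_I, mul_one,
    Complex.norm_real, Real.norm_eq_abs, abs_of_pos hs, norm_mul]

lemma summable_nA (c : ℤ → ℂ) (hc : Summable fun n : ℤ => ‖(n : ℂ) * c n‖)
    (κ : ℝ) {s : ℝ} (hs : 0 < s) :
    Summable (fun n : ℤ => (n : ℂ) * A c κ s n) := by
  apply Summable.of_norm
  simp only [fun n => norm_nA c κ hs n, div_eq_mul_inv]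
  exact hc.mul_right _

end ObsAux

namespace ObsAux

lemma A_scale (c : ℤ → ℂ) (κ : ℝ) {q s : ℝ} (hq : 0 < q) (hs : 0 < s)
    (hκq : κ * Real.log q = 2) (n : ℤ) :
    (n : ℂ) * A c κ (q * s) n = (q : ℂ)⁻¹ * ((n : ℂ) * A c κ s n) := by
  have hlog : Real.log (q * s) = Real.log q + Real.log s := Real.log_mul hq.ne' hs.ne'
  have hqC : (q : ℂ) ≠ 0 := by exact_mod_cast hq.ne'
  have hsC : (s : ℂ) ≠ 0 := by exact_mod_cast hs.ne'
  have h1 : Complex.I * n * Real.pi * κ * Real.log (q * s)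
      = (n : ℂ) * (2 * Real.pi * Complex.I) + Complex.I * n * Real.pi * κ * Real.log s := by
    rw [hlog]
    push_cast
    have : (κ : ℂ) * (Real.log q : ℂ) = 2 := by
      exact_mod_cast congrArg (fun x : ℝ => (x : ℂ)) hκq
    calc Complex.I * n * Real.pi * κ * ((Real.log q : ℂ) + Real.log s)
        = (n : ℂ) * (Complex.I * Real.pi) * ((κ : ℂ) * (Real.log q : ℂ))
            + Complex.I * n * Real.pi * κ * Real.log s := by ring
      _ = _ := by rw [this]; ring
  rw [A, A, h1, Complex.exp_add, Complex.exp_int_mul_two_pi_mul_I, one_mul]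
  push_cast
  field_simp

lemma FC_scale (c : ℤ → ℂ) (hc : Summable fun n : ℤ => ‖(n : ℂ) * c n‖)
    (κ : ℝ) {q s : ℝ} (hq : 0 < q) (hs : 0 < s) (hκq : κ * Real.log q = 2) :
    FC c κ (q * s) = (q : ℂ)⁻¹ * FC c κ s := by
  rw [FC, FC, tsum_congr (A_scale c κ hq hs hκq), (summable_nA c hc κ hs).tsum_mul_left]
  ring

lemma F_scale (c : ℤ → ℂ) (hc : Summable fun n : ℤ => ‖(n : ℂ) * c n‖)
    (κ : ℝ) {q s : ℝ} (hq : 0 < q) (hs : 0 < s) (hκq : κ * Real.log q = 2) :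
    F c κ s = q * F c κ (q * s) := by
  rw [F, F, FC_scale c hc κ hq hs hκq]
  rw [show ((q : ℂ)⁻¹ : ℂ) = ((q⁻¹ : ℝ) : ℂ) by push_cast; ring, Complex.re_ofReal_mul]
  field_simp

/-- relation between the `C`-series and the `c`-series -/
lemma A_rel (c : ℤ → ℂ) (C : ℤ → ℂ) (κ : ℝ) {r : ℝ} (hr : 0 < r)
    (hC : ∀ n : ℤ, C n = c n * Complex.exp (Complex.I * n * Real.pi * κ * Real.log r))
    {s : ℝ} (hs : 0 < s) (n : ℤ) :
    (n : ℂ) * A C κ s n = (r : ℂ) * ((n : ℂ) * A c κ (r * s) n) := by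
  have hlog : Real.log (r * s) = Real.log r + Real.log s := Real.log_mul hr.ne' hs.ne'
  have hrC : (r : ℂ) ≠ 0 := by exact_mod_cast hr.ne'
  have hsC : (s : ℂ) ≠ 0 := by exact_mod_cast hs.ne'
  rw [A, A, hC n, hlog]
  rw [show ((Real.log r + Real.log s : ℝ) : ℂ) = (Real.log r : ℂ) + (Real.log s : ℂ) by push_cast; ring]
  rw [mul_add, Complex.exp_add]
  push_cast
  field_simp

lemma FC_rel (c : ℤ → ℂ) (hc : Summable fun n : ℤ => ‖(n : ℂ) * c n‖)
    (C : ℤ → ℂ) (κ : ℝ) {r : ℝ} (hr : 0 < r)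
    (hC : ∀ n : ℤ, C n = c n * Complex.exp (Complex.I * n * Real.pi * κ * Real.log r))
    {s : ℝ} (hs : 0 < s) :
    FC C κ s = (r : ℂ) * FC c κ (r * s) := by
  rw [FC, FC, tsum_congr (A_rel c C κ hr hC hs),
    (summable_nA c hc κ (by positivity)).tsum_mul_left]
  ring

lemma F_rel (c : ℤ → ℂ) (hc : Summable fun n : ℤ => ‖(n : ℂ) * c n‖)
    (C : ℤ → ℂ) (κ : ℝ) {r : ℝ} (hr : 0 < r)
    (hC : ∀ n : ℤ, C n = c n * Complex.exp (Complex.I * n * Real.pi * κ * Real.log r))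
    {s : ℝ} (hs : 0 < s) :
    F C κ s = r * F c κ (r * s) := by
  rw [F, F, FC_rel c hc C κ hr hC hs, Complex.re_ofReal_mul]

end ObsAux

namespace ObsAux

lemma continuousOn_FC (c : ℤ → ℂ) (hc : Summable fun n : ℤ => ‖(n : ℂ) * c n‖)
    (κ : ℝ) {ε : ℝ} (hε : 0 < ε) :
    ContinuousOn (fun s => FC c κ s) (Set.Ici ε) := by
  unfold FC
  apply ContinuousOn.mul continuousOn_const
  apply continuousOn_tsum (u := fun n : ℤ => ‖(n : ℂ) * c n‖ / ε)
  · intro n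
    apply ContinuousOn.mul continuousOn_const
    unfold A
    apply ContinuousOn.div
    · apply ContinuousOn.mul continuousOn_const
      apply Complex.continuous_exp.comp_continuousOn
      show ContinuousOn (fun s : ℝ => (Complex.I * n * Real.pi * κ) * ((Real.log s : ℝ) : ℂ)) _
      apply ContinuousOn.mul continuousOn_const
      exact Complex.continuous_ofReal.comp_continuousOn
        (Real.continuousOn_log.mono (fun s hs => by
          simp only [Set.mem_compl_iff, Set.mem_singleton_iff]
          exact (lt_of_lt_of_le hε hs).ne'))
    · exact Complex.continuous_ofReal.continuousOn
    · intro s hs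
      exact_mod_cast (lt_of_lt_of_le hε hs).ne'
  · exact hc.div_const ε
  · intro n s hs
    rw [norm_nA c κ (lt_of_lt_of_le hε hs) n]
    apply div_le_div_of_nonneg_left (norm_nonneg _) hε hs

lemma continuousOn_F (c : ℤ → ℂ) (hc : Summable fun n : ℤ => ‖(n : ℂ) * c n‖)
    (κ : ℝ) {ε : ℝ} (hε : 0 < ε) :
    ContinuousOn (fun s => F c κ s) (Set.Ici ε) :=
  Complex.continuous_re.comp_continuousOn (continuousOn_FC c hc κ hε)

lemma intervalIntegrable_F_sq (c : ℤ → ℂ) (hc : Summable fun n : ℤ => ‖(n : ℂ) * c n‖)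
    (κ : ℝ) {a b : ℝ} (ha : 0 < a) (hab : a ≤ b) :
    IntervalIntegrable (fun s => F c κ s ^ 2) volume a b := by
  apply ContinuousOn.intervalIntegrable
  apply ((continuousOn_F c hc κ ha).pow 2).mono
  rw [Set.uIcc_of_le hab]
  exact fun x hx => hx.1

end ObsAux

namespace ObsAux

lemma split (c C : ℤ → ℂ) (hc : Summable fun n : ℤ => ‖(n : ℂ) * c n‖)
    (hCc : Summable fun n : ℤ => ‖(n : ℂ) * C n‖) (κ : ℝ) {s₁ s₂ : ℝ}
    (h1 : 0 < s₁) (h2 : 0 < s₂) :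
    Complex.I * Real.pi * κ * ∑' n : ℤ, (n : ℂ) *
      (c n * Complex.exp (Complex.I * n * Real.pi * κ * Real.log s₁) / ((s₁ : ℝ) : ℂ)
       + C n * Complex.exp (Complex.I * n * Real.pi * κ * Real.log s₂) / ((s₂ : ℝ) : ℂ))
      = FC c κ s₁ + FC C κ s₂ := by
  have : (fun n : ℤ => (n : ℂ) *
      (c n * Complex.exp (Complex.I * n * Real.pi * κ * Real.log s₁) / ((s₁ : ℝ) : ℂ)
       + C n * Complex.exp (Complex.I * n * Real.pi * κ * Real.log s₂) / ((s₂ : ℝ) : ℂ)))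
      = fun n : ℤ => (n : ℂ) * A c κ s₁ n + (n : ℂ) * A C κ s₂ n :=
    funext fun n => mul_add _ _ _
  rw [this, Summable.tsum_add (summable_nA c hc κ h1) (summable_nA C hCc κ h2), FC, FC]
  ring

lemma split_sub (c C : ℤ → ℂ) (hc : Summable fun n : ℤ => ‖(n : ℂ) * c n‖)
    (hCc : Summable fun n : ℤ => ‖(n : ℂ) * C n‖) (κ : ℝ) {s₁ s₂ : ℝ}
    (h1 : 0 < s₁) (h2 : 0 < s₂) :
    Complex.I * Real.pi * κ * ∑' n : ℤ, (n : ℂ) *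
      (c n * Complex.exp (Complex.I * n * Real.pi * κ * Real.log s₁) / ((s₁ : ℝ) : ℂ)
       - C n * Complex.exp (Complex.I * n * Real.pi * κ * Real.log s₂) / ((s₂ : ℝ) : ℂ))
      = FC c κ s₁ - FC C κ s₂ := by
  have : (fun n : ℤ => (n : ℂ) *
      (c n * Complex.exp (Complex.I * n * Real.pi * κ * Real.log s₁) / ((s₁ : ℝ) : ℂ)
       - C n * Complex.exp (Complex.I * n * Real.pi * κ * Real.log s₂) / ((s₂ : ℝ) : ℂ)))
      = fun n : ℤ => (n : ℂ) * A c κ s₁ n - (n : ℂ) * A C κ s₂ n :=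
    funext fun n => mul_sub _ _ _
  rw [this, Summable.tsum_sub (summable_nA c hc κ h1) (summable_nA C hCc κ h2), FC, FC]
  ring

lemma summable_C (c C : ℤ → ℂ) (hc : Summable fun n : ℤ => ‖(n : ℂ) * c n‖)
    (κ θ : ℝ)
    (hC : ∀ n : ℤ, C n = c n * Complex.exp (Complex.I * n * Real.pi * κ * θ)) :
    Summable fun n : ℤ => ‖(n : ℂ) * C n‖ := by
  apply hc.congr
  intro n
  have h : Complex.I * n * Real.pi * κ * θ = ((n * Real.pi * κ * θ : ℝ) : ℂ) * Complex.I := by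
    push_cast; ring
  rw [hC n, h]
  conv_rhs => rw [show (n : ℂ) * (c n * Complex.exp (((n * Real.pi * κ * θ : ℝ) : ℂ) * Complex.I))
      = ((n : ℂ) * c n) * Complex.exp (((n * Real.pi * κ * θ : ℝ) : ℂ) * Complex.I) from by ring,
    norm_mul, Complex.norm_exp_ofReal_mul_I, mul_one]

end ObsAux

attribute [irreducible] ObsAux.F ObsAux.FC ObsAux.A

set_option maxHeartbeats 2000000 in
/-- observability at one endpoint in the sharp time
`T_ℓ = (αβ−1)t₀ = 2L₀/((1−ℓ₁)(1−ℓ₂))`. -/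
theorem observability_one_endpoint
    (ℓ₁ ℓ₂ L₀ t₀ α β κ : ℝ)
    (hℓ₁ : 0 ≤ ℓ₁) (hℓ₁' : ℓ₁ < 1) (hℓ₂ : 0 ≤ ℓ₂) (hℓ₂' : ℓ₂ < 1)
    (hℓ : 0 < ℓ₁ + ℓ₂) (hL₀ : 0 < L₀) (ht₀ : t₀ = L₀ / (ℓ₁ + ℓ₂))
    (hα : α = (1 + ℓ₁) / (1 - ℓ₂)) (hβ : β = (1 + ℓ₂) / (1 - ℓ₁))
    (hκ : κ = 2 / Real.log (α * β))
    (L : ℝ) (hL : L = max ℓ₁ ℓ₂)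
    (c : ℤ → ℂ) (hc0 : c 0 = 0)
    (hcsum : Summable fun n : ℤ => ‖(n : ℂ) * c n‖)
    (hconj : ∀ n : ℤ, c (-n) = (starRingEnd ℂ) (c n))
    (C : ℤ → ℂ)
    (hC : ∀ n : ℤ, C n = c n *
      Complex.exp (Complex.I * n * Real.pi * κ * Real.log ((1 + ℓ₂) / (1 - ℓ₂))))
    (Φx : ℝ → ℝ → ℝ)
    (hΦx : ∀ t : ℝ, t₀ ≤ t → ∀ x : ℝ, -ℓ₁ * t ≤ x → x ≤ ℓ₂ * t →
      (Φx x t : ℂ) = Complex.I * Real.pi * κ * ∑' n : ℤ, (n : ℂ) *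
        (c n * Complex.exp (Complex.I * n * Real.pi * κ * Real.log (t + x)) /
            ((t + x : ℝ) : ℂ) +
         C n * Complex.exp (Complex.I * n * Real.pi * κ * Real.log (t - x)) /
            ((t - x : ℝ) : ℂ)))
    (Φt : ℝ → ℝ → ℝ)
    (hΦt : ∀ t : ℝ, t₀ ≤ t → ∀ x : ℝ, -ℓ₁ * t ≤ x → x ≤ ℓ₂ * t →
      (Φt x t : ℂ) = Complex.I * Real.pi * κ * ∑' n : ℤ, (n : ℂ) *
        (c n * Complex.exp (Complex.I * n * Real.pi * κ * Real.log (t + x)) /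
            ((t + x : ℝ) : ℂ) -
         C n * Complex.exp (Complex.I * n * Real.pi * κ * Real.log (t - x)) /
            ((t - x : ℝ) : ℂ)))
    (E : ℝ → ℝ)
    (hE : ∀ t : ℝ, E t = (1 / 2) * ∫ x in Set.Ioo (-ℓ₁ * t) (ℓ₂ * t),
      ((Φx x t) ^ 2 + (Φt x t) ^ 2))
    :
    ∀ T : ℝ, (α * β - 1) * t₀ ≤ T →
      E t₀ ≤ α * β * (1 - ℓ₂ ^ 2) ^ 2 / (4 * (1 - L)) *
        ∫ t in Set.Ioo t₀ (t₀ + T), (Φx (ℓ₂ * t) t) ^ 2 := by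
  intro T hT
  have h1 : (0:ℝ) < 1 - ℓ₁ := by linarith
  have h2 : (0:ℝ) < 1 - ℓ₂ := by linarith
  have ht0 : 0 < t₀ := by rw [ht₀]; positivity
  obtain ⟨q, hqdef⟩ : ∃ x : ℝ, x = α * β := ⟨_, rfl⟩
  rw [← hqdef] at hT hκ ⊢
  have hqval : q = ((1 + ℓ₁) * (1 + ℓ₂)) / ((1 - ℓ₂) * (1 - ℓ₁)) := by
    rw [hqdef, hα, hβ]; field_simp
  have hq1 : 1 < q := by
    rw [hqval, lt_div_iff₀ (by positivity)]; nlinarith only [hℓ, mul_nonneg hℓ₁ hℓ₂]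
  have hq0 : 0 < q := by linarith
  have hlogq : 0 < Real.log q := Real.log_pos hq1
  have hκq : κ * Real.log q = 2 := by
    rw [hκ]; field_simp
  obtain ⟨r, hrdef⟩ : ∃ x : ℝ, x = (1 + ℓ₂) / (1 - ℓ₂) := ⟨_, rfl⟩
  rw [show Real.log ((1 + ℓ₂) / (1 - ℓ₂)) = Real.log r from by rw [hrdef]] at hC
  have hr0 : 0 < r := by rw [hrdef]; positivity
  have hrr : r * (1 - ℓ₂) = 1 + ℓ₂ := by rw [hrdef]; field_simp
  have hr1 : 1 ≤ r := by nlinarith only [hrr, hℓ₂, h2]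
  have hCsum : Summable fun n : ℤ => ‖(n : ℂ) * C n‖ :=
    ObsAux.summable_C c C hcsum κ _ hC
  have hL2 : ℓ₂ ≤ L := by rw [hL]; exact le_max_right _ _
  have hL0 : 0 ≤ L := by rw [hL]; exact le_trans hℓ₁ (le_max_left _ _)
  have hL1 : L < 1 := by rw [hL]; exact max_lt hℓ₁' hℓ₂'
  have hLpos : 0 < 1 - L := by linarith
  have hKq : q * (1 - L) ≤ q * (1 + ℓ₂) := by
    linarith only [mul_nonneg hq0.le hL0, mul_nonneg hq0.le hℓ₂]
  have hKr : r * (1 - L) ≤ q * (1 + ℓ₂) := by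
    have f1 : 0 ≤ r * (L - ℓ₂) := mul_nonneg hr0.le (sub_nonneg.mpr hL2)
    have f2 : 0 ≤ (q - 1) * (1 + ℓ₂) :=
      mul_nonneg (by linarith only [hq1]) (by linarith only [hℓ₂])
    nlinarith only [f1, f2, hrr]
  have hTa : t₀ ≤ t₀ + T := by
    linarith only [hT, mul_nonneg (by linarith only [hq1] : (0:ℝ) ≤ q - 1) ht0.le]
  -- representation of Φx, Φt via the two travelling components
  have hrep : ∀ t, t₀ ≤ t → ∀ x, -ℓ₁ * t ≤ x → x ≤ ℓ₂ * t →
      Φx x t = ObsAux.F c κ (t + x) + ObsAux.F C κ (t - x) ∧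
      Φt x t = ObsAux.F c κ (t + x) - ObsAux.F C κ (t - x) := by
    intro t ht x hx1 hx2
    have htpos : 0 < t := lt_of_lt_of_le ht0 ht
    have hs1 : 0 < t + x := by linarith only [mul_pos h1 htpos, hx1]
    have hs2 : 0 < t - x := by linarith only [mul_pos h2 htpos, hx2]
    have e1 := hΦx t ht x hx1 hx2
    rw [ObsAux.split c C hcsum hCsum κ hs1 hs2] at e1
    have e2 := hΦt t ht x hx1 hx2
    rw [ObsAux.split_sub c C hcsum hCsum κ hs1 hs2] at e2
    constructor
    · have := congrArg Complex.re e1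
      simpa [ObsAux.F] using this
    · have := congrArg Complex.re e2
      simpa [ObsAux.F] using this
  -- the boundary value
  have hbd : ∀ t, t₀ ≤ t → Φx (ℓ₂ * t) t = (1 + r) * ObsAux.F c κ ((1 + ℓ₂) * t) := by
    intro t ht
    have htpos : 0 < t := lt_of_lt_of_le ht0 ht
    have hx1 : -ℓ₁ * t ≤ ℓ₂ * t := by
      linarith only [mul_nonneg hℓ₁ htpos.le, mul_nonneg hℓ₂ htpos.le]
    obtain ⟨h, -⟩ := hrep t ht (ℓ₂ * t) hx1 le_rfl
    have hs2 : 0 < t - ℓ₂ * t := by linarith only [mul_pos h2 htpos]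
    rw [h, ObsAux.F_rel c hcsum C κ hr0 hC hs2,
      show r * (t - ℓ₂ * t) = (1 + ℓ₂) * t from by
        rw [hrdef]; field_simp,
      show t + ℓ₂ * t = (1 + ℓ₂) * t from by ring]
    ring
  -- endpoints
  have hA0 : (0:ℝ) < (1 + ℓ₂) * t₀ := by positivity
  have h110 : (0:ℝ) < (1 - ℓ₁) * t₀ := by positivity
  have h120 : (0:ℝ) < (1 - ℓ₂) * t₀ := by positivity
  have hqr : q * (1 - ℓ₁) = r * (1 + ℓ₁) := by
    rw [hqval, hrdef]; field_simp
  have hAMc : 1 + ℓ₂ ≤ q * (1 - ℓ₁) := by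
    linarith only [hqr, hrr, mul_nonneg hr0.le hℓ.le]
  have hAM : (1 + ℓ₂) * t₀ ≤ q * (1 - ℓ₁) * t₀ :=
    mul_le_mul_of_nonneg_right hAMc ht0.le
  have hMB : q * (1 - ℓ₁) * t₀ ≤ q * ((1 + ℓ₂) * t₀) := by
    rw [mul_assoc]
    exact mul_le_mul_of_nonneg_left (mul_le_mul_of_nonneg_right
      (by linarith only [hℓ₁, hℓ₂] : (1:ℝ) - ℓ₁ ≤ 1 + ℓ₂) ht0.le) hq0.le
  have hAB : (1 + ℓ₂) * t₀ ≤ q * ((1 + ℓ₂) * t₀) := le_trans hAM hMB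
  have hBbig : q * ((1 + ℓ₂) * t₀) ≤ (1 + ℓ₂) * (t₀ + T) := by
    linarith only [mul_le_mul_of_nonneg_left hT (by linarith only [hℓ₂] : (0:ℝ) ≤ 1 + ℓ₂)]
  have II1 : IntervalIntegrable (fun s => ObsAux.F c κ s ^ 2) volume
      ((1 + ℓ₂) * t₀) (q * (1 - ℓ₁) * t₀) :=
    ObsAux.intervalIntegrable_F_sq c hcsum κ hA0 hAM
  have II2 : IntervalIntegrable (fun s => ObsAux.F c κ s ^ 2) volume
      (q * (1 - ℓ₁) * t₀) (q * ((1 + ℓ₂) * t₀)) :=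
    ObsAux.intervalIntegrable_F_sq c hcsum κ (lt_of_lt_of_le hA0 hAM) hMB
  have IIbig : IntervalIntegrable (fun s => ObsAux.F c κ s ^ 2) volume
      ((1 + ℓ₂) * t₀) ((1 + ℓ₂) * (t₀ + T)) :=
    ObsAux.intervalIntegrable_F_sq c hcsum κ hA0 (le_trans hAB hBbig)
  have ha_b : -ℓ₁ * t₀ ≤ ℓ₂ * t₀ := by
    linarith only [mul_nonneg hℓ₁ ht0.le, mul_nonneg hℓ₂ ht0.le]
  have h12le : (1 - ℓ₂) * t₀ ≤ (1 + ℓ₁) * t₀ :=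
    mul_le_mul_of_nonneg_right (by linarith only [hℓ₁, hℓ₂]) ht0.le
  have h11le : (1 - ℓ₁) * t₀ ≤ (1 + ℓ₂) * t₀ :=
    mul_le_mul_of_nonneg_right (by linarith only [hℓ₁, hℓ₂]) ht0.le
  -- integrability of the composites
  have hfi : IntervalIntegrable (fun x => ObsAux.F c κ (t₀ + x) ^ 2) volume
      (-ℓ₁ * t₀) (ℓ₂ * t₀) := by
    apply ContinuousOn.intervalIntegrable
    apply ((ObsAux.continuousOn_F c hcsum κ h110).pow 2).comp
      ((continuous_const.add continuous_id).continuousOn)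
    intro x hx
    rw [Set.uIcc_of_le ha_b] at hx
    have := hx.1
    simp only [Set.mem_Ici, id_eq, Pi.add_apply]
    linarith only [this]
  have hgi : IntervalIntegrable (fun x => ObsAux.F C κ (t₀ - x) ^ 2) volume
      (-ℓ₁ * t₀) (ℓ₂ * t₀) := by
    apply ContinuousOn.intervalIntegrable
    apply ((ObsAux.continuousOn_F C hCsum κ h120).pow 2).comp
      ((continuous_const.sub continuous_id).continuousOn)
    intro x hx
    rw [Set.uIcc_of_le ha_b] at hx
    have := hx.2
    simp only [Set.mem_Ici, id_eq, Pi.sub_apply]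
    linarith only [this]
  -- the energy as a sum of two interval integrals
  have hEeq : E t₀ = (∫ x in (-ℓ₁ * t₀)..(ℓ₂ * t₀), ObsAux.F c κ (t₀ + x) ^ 2)
      + ∫ x in (-ℓ₁ * t₀)..(ℓ₂ * t₀), ObsAux.F C κ (t₀ - x) ^ 2 := by
    rw [hE t₀,
      show (∫ x in Set.Ioo (-ℓ₁ * t₀) (ℓ₂ * t₀), ((Φx x t₀) ^ 2 + (Φt x t₀) ^ 2))
        = ∫ x in Set.Ioo (-ℓ₁ * t₀) (ℓ₂ * t₀),
            (2 * ObsAux.F c κ (t₀ + x) ^ 2 + 2 * ObsAux.F C κ (t₀ - x) ^ 2) from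
        setIntegral_congr_fun measurableSet_Ioo (fun x hx => by
          obtain ⟨hX, hT'⟩ := hrep t₀ le_rfl x hx.1.le hx.2.le
          rw [hX, hT']; ring)]
    rw [← integral_Ioc_eq_integral_Ioo, ← intervalIntegral.integral_of_le ha_b,
      intervalIntegral.integral_add (hfi.const_mul 2) (hgi.const_mul 2),
      intervalIntegral.integral_const_mul, intervalIntegral.integral_const_mul]
    ring
  -- substitution in the first integral
  have e2 : (∫ x in (-ℓ₁ * t₀)..(ℓ₂ * t₀), ObsAux.F c κ (t₀ + x) ^ 2)
      = ∫ u in ((1 - ℓ₁) * t₀)..((1 + ℓ₂) * t₀), ObsAux.F c κ u ^ 2 := by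
    have := intervalIntegral.integral_comp_add_left (a := -ℓ₁ * t₀) (b := ℓ₂ * t₀)
      (fun s => ObsAux.F c κ s ^ 2) t₀
    simpa only [show t₀ + -ℓ₁ * t₀ = (1 - ℓ₁) * t₀ from by ring,
      show t₀ + ℓ₂ * t₀ = (1 + ℓ₂) * t₀ from by ring] using this
  -- substitution in the second integral
  have e3 : (∫ x in (-ℓ₁ * t₀)..(ℓ₂ * t₀), ObsAux.F C κ (t₀ - x) ^ 2)
      = ∫ u in ((1 - ℓ₂) * t₀)..((1 + ℓ₁) * t₀), ObsAux.F C κ u ^ 2 := by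
    have := intervalIntegral.integral_comp_sub_left (a := -ℓ₁ * t₀) (b := ℓ₂ * t₀)
      (fun s => ObsAux.F C κ s ^ 2) t₀
    simpa only [show t₀ - ℓ₂ * t₀ = (1 - ℓ₂) * t₀ from by ring,
      show t₀ - -ℓ₁ * t₀ = (1 + ℓ₁) * t₀ from by ring] using this
  -- rewrite the G-integral as an F-integral
  have e4 : (∫ u in ((1 - ℓ₂) * t₀)..((1 + ℓ₁) * t₀), ObsAux.F C κ u ^ 2)
      = r * ∫ v in ((1 + ℓ₂) * t₀)..(q * (1 - ℓ₁) * t₀), ObsAux.F c κ v ^ 2 := by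
    rw [intervalIntegral.integral_congr
      (g := fun u => r ^ 2 * (fun s => ObsAux.F c κ s ^ 2) (r * u))
      (fun u hu => by
        rw [Set.uIcc_of_le h12le] at hu
        have hu0 : 0 < u := lt_of_lt_of_le h120 hu.1
        rw [ObsAux.F_rel c hcsum C κ hr0 hC hu0]
        ring)]
    rw [intervalIntegral.integral_const_mul,
      intervalIntegral.integral_comp_mul_left (fun s => ObsAux.F c κ s ^ 2) hr0.ne',
      show r * ((1 - ℓ₂) * t₀) = (1 + ℓ₂) * t₀ from by rw [hrdef]; field_simp,
      show r * ((1 + ℓ₁) * t₀) = q * (1 - ℓ₁) * t₀ from by rw [← mul_assoc, ← hqr],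
      smul_eq_mul]
    field_simp
  -- rewrite the low F-integral as a high F-integral
  have e5 : (∫ u in ((1 - ℓ₁) * t₀)..((1 + ℓ₂) * t₀), ObsAux.F c κ u ^ 2)
      = q * ∫ v in (q * (1 - ℓ₁) * t₀)..(q * ((1 + ℓ₂) * t₀)), ObsAux.F c κ v ^ 2 := by
    rw [intervalIntegral.integral_congr
      (g := fun u => q ^ 2 * (fun s => ObsAux.F c κ s ^ 2) (q * u))
      (fun u hu => by
        rw [Set.uIcc_of_le h11le] at hu
        have hu0 : 0 < u := lt_of_lt_of_le h110 hu.1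
        rw [ObsAux.F_scale c hcsum κ hq0 hu0 hκq]
        ring)]
    rw [intervalIntegral.integral_const_mul,
      intervalIntegral.integral_comp_mul_left (fun s => ObsAux.F c κ s ^ 2) hq0.ne',
      show q * ((1 - ℓ₁) * t₀) = q * (1 - ℓ₁) * t₀ from by ring,
      smul_eq_mul]
    field_simp
  -- energy bound
  have hK0 : 0 < q * (1 + ℓ₂) / (1 - L) := by positivity
  have hEle : E t₀ ≤ (q * (1 + ℓ₂) / (1 - L)) *
      ∫ v in ((1 + ℓ₂) * t₀)..(q * ((1 + ℓ₂) * t₀)), ObsAux.F c κ v ^ 2 := by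
    rw [hEeq, e2, e3, e4, e5]
    have hIadd := intervalIntegral.integral_add_adjacent_intervals II1 II2
    have hIAM : (0:ℝ) ≤ ∫ v in ((1 + ℓ₂) * t₀)..(q * (1 - ℓ₁) * t₀), ObsAux.F c κ v ^ 2 :=
      intervalIntegral.integral_nonneg hAM (fun u _ => sq_nonneg _)
    have hIMB : (0:ℝ) ≤ ∫ v in (q * (1 - ℓ₁) * t₀)..(q * ((1 + ℓ₂) * t₀)), ObsAux.F c κ v ^ 2 :=
      intervalIntegral.integral_nonneg hMB (fun u _ => sq_nonneg _)
    clear hEeq e2 e3 e4 e5 hrep hbd II1 II2 IIbig hfi hgi hΦx hΦt hE hC hconj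
    generalize hJ1 : (∫ v in ((1 + ℓ₂) * t₀)..(q * (1 - ℓ₁) * t₀), ObsAux.F c κ v ^ 2) = I1
      at hIadd hIAM ⊢
    generalize hJ2 : (∫ v in (q * (1 - ℓ₁) * t₀)..(q * ((1 + ℓ₂) * t₀)), ObsAux.F c κ v ^ 2) = I2
      at hIadd hIMB ⊢
    generalize hJ3 : (∫ v in ((1 + ℓ₂) * t₀)..(q * ((1 + ℓ₂) * t₀)), ObsAux.F c κ v ^ 2) = I3
      at hIadd ⊢
    rw [div_mul_eq_mul_div, le_div_iff₀ hLpos, ← hIadd]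
    linarith only [mul_le_mul_of_nonneg_right hKq hIMB,
      mul_le_mul_of_nonneg_right hKr hIAM]
  -- the boundary integral
  have hJ : (∫ t in Set.Ioo t₀ (t₀ + T), (Φx (ℓ₂ * t) t) ^ 2)
      = (1 + r) ^ 2 * ((1 + ℓ₂)⁻¹ *
        ∫ v in ((1 + ℓ₂) * t₀)..((1 + ℓ₂) * (t₀ + T)), ObsAux.F c κ v ^ 2) := by
    rw [show (∫ t in Set.Ioo t₀ (t₀ + T), (Φx (ℓ₂ * t) t) ^ 2)
        = ∫ t in Set.Ioo t₀ (t₀ + T),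
            ((1 + r) ^ 2 * (fun s => ObsAux.F c κ s ^ 2) ((1 + ℓ₂) * t)) from
      setIntegral_congr_fun measurableSet_Ioo (fun t htt => by
        rw [hbd t htt.1.le]; ring)]
    rw [← integral_Ioc_eq_integral_Ioo, ← intervalIntegral.integral_of_le hTa,
      intervalIntegral.integral_const_mul,
      intervalIntegral.integral_comp_mul_left (fun s => ObsAux.F c κ s ^ 2)
        (by positivity : (0:ℝ) < 1 + ℓ₂).ne',
      smul_eq_mul]
  have hmono : (∫ v in ((1 + ℓ₂) * t₀)..(q * ((1 + ℓ₂) * t₀)), ObsAux.F c κ v ^ 2)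
      ≤ ∫ v in ((1 + ℓ₂) * t₀)..((1 + ℓ₂) * (t₀ + T)), ObsAux.F c κ v ^ 2 :=
    intervalIntegral.integral_mono_interval le_rfl hAB hBbig
      (ae_of_all _ (fun x => sq_nonneg _)) IIbig
  have hconst : (q * (1 + ℓ₂) / (1 - L))
      = (q * (1 - ℓ₂ ^ 2) ^ 2 / (4 * (1 - L))) * ((1 + r) ^ 2 * (1 + ℓ₂)⁻¹) := by
    rw [hrdef]
    have : (1:ℝ) - ℓ₂ ^ 2 = (1 - ℓ₂) * (1 + ℓ₂) := by ring
    rw [this]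
    field_simp
    ring
  rw [hJ]
  calc E t₀ ≤ (q * (1 + ℓ₂) / (1 - L)) *
      ∫ v in ((1 + ℓ₂) * t₀)..(q * ((1 + ℓ₂) * t₀)), ObsAux.F c κ v ^ 2 := hEle
    _ ≤ (q * (1 + ℓ₂) / (1 - L)) *
      ∫ v in ((1 + ℓ₂) * t₀)..((1 + ℓ₂) * (t₀ + T)), ObsAux.F c κ v ^ 2 :=
        mul_le_mul_of_nonneg_left hmono hK0.le
    _ = q * (1 - ℓ₂ ^ 2) ^ 2 / (4 * (1 - L)) * ((1 + r) ^ 2 * ((1 + ℓ₂)⁻¹ *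
        ∫ v in ((1 + ℓ₂) * t₀)..((1 + ℓ₂) * (t₀ + T)), ObsAux.F c κ v ^ 2)) := by
      rw [hconst]; ring
end

section
/- Observability at both endpoints in the sharp time: if T ≥ T̃_ℓ where T̃_ℓ = (max{α,β} − 1)·t₀ = max{ L₀/(1−ℓ₁), L₀/(1−ℓ₂) }, then E(t₀) ≤ ((1−l²)²·max{α,β}/(4(1−L)))·∫_{t₀}^{t₀+T} ( φₓ(−ℓ₁t, t)² + φₓ(ℓ₂t, t)² ) dt, where l = min{ℓ₁,ℓ₂} and L = max{ℓ₁,ℓ₂}. -/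
open MeasureTheory

private lemma obs_helper1 (X p q t : ℂ) (hp : p ≠ 0) (hq : q ≠ 0) (ht : t ≠ 0)
    (hpq : p + q = 2) :
    2 / q * (X / (p * t)) = X * ((p * t)⁻¹ + (q * t)⁻¹) := by
  field_simp
  ring_nf
  linear_combination (-X) * hpq

private lemma obs_helper2 (Z b v : ℂ) (hb : b ≠ 0) : b * (Z / (b * v)) = Z * v⁻¹ := by
  rw [mul_div_assoc', mul_div_mul_left Z v hb, div_eq_mul_inv]

set_option maxHeartbeats 2000000 in
/-- observability at both endpoints in the sharp time
`T̃_ℓ = (max{α,β} − 1)·t₀`. -/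
theorem observability_two_endpoints
    (ℓ₁ ℓ₂ L₀ t₀ α β κ : ℝ)
    (hℓ₁ : 0 ≤ ℓ₁) (hℓ₁' : ℓ₁ < 1) (hℓ₂ : 0 ≤ ℓ₂) (hℓ₂' : ℓ₂ < 1)
    (hℓ : 0 < ℓ₁ + ℓ₂) (hL₀ : 0 < L₀) (ht₀ : t₀ = L₀ / (ℓ₁ + ℓ₂))
    (hα : α = (1 + ℓ₁) / (1 - ℓ₂)) (hβ : β = (1 + ℓ₂) / (1 - ℓ₁))
    (hκ : κ = 2 / Real.log (α * β))
    (l L : ℝ) (hl : l = min ℓ₁ ℓ₂) (hL : L = max ℓ₁ ℓ₂)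
    (c : ℤ → ℂ) (hc0 : c 0 = 0)
    (hcsum : Summable fun n : ℤ => ‖(n : ℂ) * c n‖)
    (hconj : ∀ n : ℤ, c (-n) = (starRingEnd ℂ) (c n))
    (C : ℤ → ℂ)
    (hC : ∀ n : ℤ, C n = c n *
      Complex.exp (Complex.I * n * Real.pi * κ * Real.log ((1 + ℓ₂) / (1 - ℓ₂))))
    (Φx : ℝ → ℝ → ℝ)
    (hΦx : ∀ t : ℝ, t₀ ≤ t → ∀ x : ℝ, -ℓ₁ * t ≤ x → x ≤ ℓ₂ * t →
      (Φx x t : ℂ) = Complex.I * Real.pi * κ * ∑' n : ℤ, (n : ℂ) *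
        (c n * Complex.exp (Complex.I * n * Real.pi * κ * Real.log (t + x)) /
            ((t + x : ℝ) : ℂ) +
         C n * Complex.exp (Complex.I * n * Real.pi * κ * Real.log (t - x)) /
            ((t - x : ℝ) : ℂ)))
    (Φt : ℝ → ℝ → ℝ)
    (hΦt : ∀ t : ℝ, t₀ ≤ t → ∀ x : ℝ, -ℓ₁ * t ≤ x → x ≤ ℓ₂ * t →
      (Φt x t : ℂ) = Complex.I * Real.pi * κ * ∑' n : ℤ, (n : ℂ) *
        (c n * Complex.exp (Complex.I * n * Real.pi * κ * Real.log (t + x)) /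
            ((t + x : ℝ) : ℂ) -
         C n * Complex.exp (Complex.I * n * Real.pi * κ * Real.log (t - x)) /
            ((t - x : ℝ) : ℂ)))
    (E : ℝ → ℝ)
    (hE : ∀ t : ℝ, E t = (1 / 2) * ∫ x in Set.Ioo (-ℓ₁ * t) (ℓ₂ * t),
      ((Φx x t) ^ 2 + (Φt x t) ^ 2))
    :
    ∀ T : ℝ, (max α β - 1) * t₀ ≤ T →
      E t₀ ≤ (1 - l ^ 2) ^ 2 * max α β / (4 * (1 - L)) *
        ∫ t in Set.Ioo t₀ (t₀ + T),
          ((Φx (-ℓ₁ * t) t) ^ 2 + (Φx (ℓ₂ * t) t) ^ 2) := by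
  intro T hT
  -- basic positivity facts
  have h1l1 : (0:ℝ) < 1 - ℓ₁ := by linarith
  have h1l2 : (0:ℝ) < 1 - ℓ₂ := by linarith
  have h1p1 : (0:ℝ) < 1 + ℓ₁ := by linarith
  have h1p2 : (0:ℝ) < 1 + ℓ₂ := by linarith
  have hsq1 : (0:ℝ) ≤ 1 - ℓ₁ ^ 2 := by nlinarith
  have hsq2 : (0:ℝ) ≤ 1 - ℓ₂ ^ 2 := by nlinarith
  have ht₀pos : 0 < t₀ := by rw [ht₀]; positivity
  have hα1 : 1 < α := by
    rw [hα, lt_div_iff₀ h1l2]; linarith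
  have hβ1 : 1 < β := by
    rw [hβ, lt_div_iff₀ h1l1]; linarith
  set M := max α β with hM
  have hMα : α ≤ M := le_max_left _ _
  have hMβ : β ≤ M := le_max_right _ _
  have hM1 : 1 < M := lt_of_lt_of_le hα1 hMα
  have hαβ1 : 1 < α * β := by nlinarith
  have hαβpos : 0 < α * β := by linarith
  have hlogpos : 0 < Real.log (α * β) := Real.log_pos hαβ1
  have hκlog : κ * Real.log (α * β) = 2 := by
    rw [hκ]; field_simp
  set bb := (1 + ℓ₂) / (1 - ℓ₂) with hbb
  have hbbpos : 0 < bb := by rw [hbb]; positivity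
  have hT0 : 0 ≤ T := le_trans (mul_nonneg (by linarith) ht₀pos.le) hT
  have h1L : 0 < 1 - L := by
    rw [hL]; have := max_lt hℓ₁' hℓ₂'; linarith
  -- the master function
  set Hf : ℝ → ℂ := fun u => ∑' n : ℤ, (n : ℂ) * c n *
      Complex.exp (Complex.I * n * Real.pi * κ * Real.log u) with hHf
  set A : ℝ → ℂ := fun u => Complex.I * Real.pi * κ * Hf u / u with hA
  set a : ℝ → ℝ := fun u => (A u).re with ha
  -- summability
  have hnormg : ∀ (n : ℤ) (u : ℝ), ‖(n : ℂ) * c n *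
      Complex.exp (Complex.I * n * Real.pi * κ * Real.log u)‖ = ‖(n : ℂ) * c n‖ := by
    intro n u
    have h : Complex.I * n * Real.pi * κ * (Real.log u : ℂ)
        = ((n * Real.pi * κ * Real.log u : ℝ) : ℂ) * Complex.I := by push_cast; ring
    rw [norm_mul, h, Complex.norm_exp_ofReal_mul_I, mul_one]
  have hgsum : ∀ u : ℝ, Summable fun n : ℤ => (n : ℂ) * c n *
      Complex.exp (Complex.I * n * Real.pi * κ * Real.log u) := by
    intro u
    apply Summable.of_norm
    exact hcsum.congr fun n => (hnormg n u).symm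
  -- reality of A
  have hstarH : ∀ u : ℝ, (starRingEnd ℂ) (Hf u) = - Hf u := by
    intro u
    simp only [hHf]
    rw [starRingEnd_apply, tsum_star,
      ← (Equiv.neg ℤ).tsum_eq (fun n : ℤ => (n : ℂ) * c n *
        Complex.exp (Complex.I * n * Real.pi * κ * Real.log u)), ← tsum_neg]
    apply tsum_congr
    intro n
    simp only [Equiv.neg_apply]
    have harg : Complex.I * ((-n : ℤ) : ℂ) * Real.pi * κ * (Real.log u : ℂ)
        = (starRingEnd ℂ) (Complex.I * (n : ℂ) * Real.pi * κ * (Real.log u : ℂ)) := by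
      simp only [map_mul, Complex.conj_I, Complex.conj_ofReal, map_intCast]
      push_cast; ring
    rw [← starRingEnd_apply, map_mul, map_mul, ← Complex.exp_conj, harg, hconj n, map_intCast]
    push_cast; ring
  have hconjA : ∀ u : ℝ, ((a u : ℝ) : ℂ) = A u := by
    intro u
    have h : (starRingEnd ℂ) (A u) = A u := by
      simp only [hA]
      rw [map_div₀, map_mul, map_mul, map_mul, Complex.conj_I, Complex.conj_ofReal,
        Complex.conj_ofReal, Complex.conj_ofReal, hstarH u]
      ring
    simpa only [ha] using Complex.conj_eq_iff_re.mp h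
  -- continuity and integrability
  have hHcont : ContinuousOn Hf {u : ℝ | u ≠ 0} := by
    simp only [hHf]
    apply continuousOn_tsum (u := fun n : ℤ => ‖(n : ℂ) * c n‖) ?_ hcsum
    · intro n x _
      exact le_of_eq (hnormg n x)
    · intro n
      apply ContinuousOn.mul continuousOn_const
      apply Complex.continuous_exp.comp_continuousOn
      apply ContinuousOn.mul continuousOn_const
      exact Complex.continuous_ofReal.comp_continuousOn
        (Real.continuousOn_log.mono (by simp [Set.subset_def]))
  have hAcont : ContinuousOn A {u : ℝ | u ≠ 0} := by
    simp only [hA]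
    exact (continuousOn_const.mul hHcont).div Complex.continuous_ofReal.continuousOn
      fun x hx => Complex.ofReal_ne_zero.mpr hx
  have hacont : ContinuousOn (fun u => a u ^ 2) {u : ℝ | u ≠ 0} := by
    simp only [ha]
    exact (Complex.continuous_re.comp_continuousOn hAcont).pow 2
  have haint : ∀ p q : ℝ, 0 < p → 0 < q →
      IntervalIntegrable (fun u => a u ^ 2) volume p q := by
    intro p q hp hq
    apply ContinuousOn.intervalIntegrable
    apply hacont.mono
    intro x hx
    exact ne_of_gt (lt_of_lt_of_le (lt_min hp hq) hx.1)
  -- key exponential identities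
  have hkeyI : ∀ (n : ℤ) (v : ℝ), 0 < v →
      C n * Complex.exp (Complex.I * n * Real.pi * κ * Real.log v)
        = c n * Complex.exp (Complex.I * n * Real.pi * κ * Real.log (bb * v)) := by
    intro n v hv
    rw [hC n, Real.log_mul (ne_of_gt hbbpos) (ne_of_gt hv), mul_assoc, ← Complex.exp_add]
    congr 1
    push_cast; ring
  have hexpp : ∀ n : ℤ,
      Complex.exp (Complex.I * n * Real.pi * κ * (Real.log (α * β) : ℂ)) = 1 := by
    intro n
    have h2 : ((κ : ℂ)) * ((Real.log (α * β) : ℝ) : ℂ) = 2 := by exact_mod_cast hκlog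
    have harg : Complex.I * n * Real.pi * κ * (Real.log (α * β) : ℂ)
        = (n : ℂ) * (2 * Real.pi * Complex.I) := by
      linear_combination (Complex.I * (n : ℂ) * (Real.pi : ℂ)) * h2
    rw [harg]
    exact Complex.exp_int_mul_two_pi_mul_I n
  have hkeyL : ∀ (n : ℤ) (t : ℝ), 0 < t →
      C n * Complex.exp (Complex.I * n * Real.pi * κ * Real.log ((1 + ℓ₁) * t))
        = c n * Complex.exp (Complex.I * n * Real.pi * κ * Real.log ((1 - ℓ₁) * t)) := by
    intro n t ht
    rw [hkeyI n ((1 + ℓ₁) * t) (by positivity)]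
    congr 1
    have hlg : Real.log (bb * ((1 + ℓ₁) * t)) = Real.log ((1 - ℓ₁) * t) + Real.log (α * β) := by
      have e1 : bb * ((1 + ℓ₁) * t) = (α * β) * ((1 - ℓ₁) * t) := by
        rw [hbb, hα, hβ]; field_simp
      rw [e1, Real.log_mul (ne_of_gt hαβpos) (by positivity)]
      ring
    calc Complex.exp (Complex.I * n * Real.pi * κ * Real.log (bb * ((1 + ℓ₁) * t)))
        = Complex.exp (Complex.I * n * Real.pi * κ * Real.log ((1 - ℓ₁) * t)) *
          Complex.exp (Complex.I * n * Real.pi * κ * (Real.log (α * β) : ℂ)) := by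
          rw [← Complex.exp_add]
          congr 1
          rw [hlg]; push_cast; ring
      _ = Complex.exp (Complex.I * n * Real.pi * κ * Real.log ((1 - ℓ₁) * t)) := by
          rw [hexpp n, mul_one]
  have hkeyR : ∀ (n : ℤ) (t : ℝ), 0 < t →
      C n * Complex.exp (Complex.I * n * Real.pi * κ * Real.log ((1 - ℓ₂) * t))
        = c n * Complex.exp (Complex.I * n * Real.pi * κ * Real.log ((1 + ℓ₂) * t)) := by
    intro n t ht
    rw [hkeyI n ((1 - ℓ₂) * t) (by positivity)]
    have e : bb * ((1 - ℓ₂) * t) = (1 + ℓ₂) * t := by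
      rw [hbb]; field_simp
    rw [e]
  -- boundary trace identities
  have htrL : ∀ t : ℝ, t₀ ≤ t → Φx (-ℓ₁ * t) t = 2 / (1 + ℓ₁) * a ((1 - ℓ₁) * t) := by
    intro t htt
    have ht' : 0 < t := lt_of_lt_of_le ht₀pos htt
    have h1 := hΦx t htt (-ℓ₁ * t) le_rfl
      (le_trans (by simpa using neg_nonpos.mpr (mul_nonneg hℓ₁ ht'.le) : -ℓ₁ * t ≤ 0)
        (mul_nonneg hℓ₂ ht'.le))
    rw [show t + -ℓ₁ * t = (1 - ℓ₁) * t by ring, show t - -ℓ₁ * t = (1 + ℓ₁) * t by ring] at h1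
    have hsum : (∑' n : ℤ, (n : ℂ) *
        (c n * Complex.exp (Complex.I * n * Real.pi * κ * Real.log ((1 - ℓ₁) * t)) /
            (((1 - ℓ₁) * t : ℝ) : ℂ) +
         C n * Complex.exp (Complex.I * n * Real.pi * κ * Real.log ((1 + ℓ₁) * t)) /
            (((1 + ℓ₁) * t : ℝ) : ℂ)))
        = Hf ((1 - ℓ₁) * t) * ((((1 - ℓ₁) * t : ℝ) : ℂ)⁻¹ + (((1 + ℓ₁) * t : ℝ) : ℂ)⁻¹) := by
      simp only [hHf]
      rw [← tsum_mul_right]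
      apply tsum_congr
      intro n
      rw [hkeyL n t ht']
      ring
    rw [hsum] at h1
    have h2 : ((2 / (1 + ℓ₁) * a ((1 - ℓ₁) * t) : ℝ) : ℂ)
        = Complex.I * Real.pi * κ * (Hf ((1 - ℓ₁) * t) *
          ((((1 - ℓ₁) * t : ℝ) : ℂ)⁻¹ + (((1 + ℓ₁) * t : ℝ) : ℂ)⁻¹)) := by
      rw [Complex.ofReal_mul, hconjA ((1 - ℓ₁) * t)]
      simp only [hA]
      rw [show (((1 - ℓ₁) * t : ℝ) : ℂ) = ((1 - ℓ₁ : ℝ) : ℂ) * ((t : ℝ) : ℂ) by push_cast; ring,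
        show (((1 + ℓ₁) * t : ℝ) : ℂ) = ((1 + ℓ₁ : ℝ) : ℂ) * ((t : ℝ) : ℂ) by push_cast; ring,
        show ((2 / (1 + ℓ₁) : ℝ) : ℂ) = 2 / ((1 + ℓ₁ : ℝ) : ℂ) by push_cast; ring]
      rw [obs_helper1 (Complex.I * (Real.pi : ℂ) * (κ : ℂ) * Hf ((1 - ℓ₁) * t)) _ _ _
        (Complex.ofReal_ne_zero.mpr (ne_of_gt h1l1)) (Complex.ofReal_ne_zero.mpr (ne_of_gt h1p1))
        (Complex.ofReal_ne_zero.mpr (ne_of_gt ht')) (by push_cast; ring)]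
      ring
    exact_mod_cast h1.trans h2.symm
  have htrR : ∀ t : ℝ, t₀ ≤ t → Φx (ℓ₂ * t) t = 2 / (1 - ℓ₂) * a ((1 + ℓ₂) * t) := by
    intro t htt
    have ht' : 0 < t := lt_of_lt_of_le ht₀pos htt
    have h1 := hΦx t htt (ℓ₂ * t)
      (le_trans (by simpa using neg_nonpos.mpr (mul_nonneg hℓ₁ ht'.le) : -ℓ₁ * t ≤ 0)
        (mul_nonneg hℓ₂ ht'.le)) le_rfl
    rw [show t + ℓ₂ * t = (1 + ℓ₂) * t by ring, show t - ℓ₂ * t = (1 - ℓ₂) * t by ring] at h1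
    have hsum : (∑' n : ℤ, (n : ℂ) *
        (c n * Complex.exp (Complex.I * n * Real.pi * κ * Real.log ((1 + ℓ₂) * t)) /
            (((1 + ℓ₂) * t : ℝ) : ℂ) +
         C n * Complex.exp (Complex.I * n * Real.pi * κ * Real.log ((1 - ℓ₂) * t)) /
            (((1 - ℓ₂) * t : ℝ) : ℂ)))
        = Hf ((1 + ℓ₂) * t) * ((((1 + ℓ₂) * t : ℝ) : ℂ)⁻¹ + (((1 - ℓ₂) * t : ℝ) : ℂ)⁻¹) := by
      simp only [hHf]
      rw [← tsum_mul_right]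
      apply tsum_congr
      intro n
      rw [hkeyR n t ht']
      ring
    rw [hsum] at h1
    have h2 : ((2 / (1 - ℓ₂) * a ((1 + ℓ₂) * t) : ℝ) : ℂ)
        = Complex.I * Real.pi * κ * (Hf ((1 + ℓ₂) * t) *
          ((((1 + ℓ₂) * t : ℝ) : ℂ)⁻¹ + (((1 - ℓ₂) * t : ℝ) : ℂ)⁻¹)) := by
      rw [Complex.ofReal_mul, hconjA ((1 + ℓ₂) * t)]
      simp only [hA]
      rw [show (((1 + ℓ₂) * t : ℝ) : ℂ) = ((1 + ℓ₂ : ℝ) : ℂ) * ((t : ℝ) : ℂ) by push_cast; ring,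
        show (((1 - ℓ₂) * t : ℝ) : ℂ) = ((1 - ℓ₂ : ℝ) : ℂ) * ((t : ℝ) : ℂ) by push_cast; ring,
        show ((2 / (1 - ℓ₂) : ℝ) : ℂ) = 2 / ((1 - ℓ₂ : ℝ) : ℂ) by push_cast; ring]
      rw [obs_helper1 (Complex.I * (Real.pi : ℂ) * (κ : ℂ) * Hf ((1 + ℓ₂) * t)) _ _ _
        (Complex.ofReal_ne_zero.mpr (ne_of_gt h1p2)) (Complex.ofReal_ne_zero.mpr (ne_of_gt h1l2))
        (Complex.ofReal_ne_zero.mpr (ne_of_gt ht')) (by push_cast; ring)]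
      ring
    exact_mod_cast h1.trans h2.symm
  -- interior identities at time t₀
  have hintid : ∀ x : ℝ, -ℓ₁ * t₀ < x → x < ℓ₂ * t₀ →
      Φx x t₀ = a (t₀ + x) + bb * a (bb * (t₀ - x)) ∧
      Φt x t₀ = a (t₀ + x) - bb * a (bb * (t₀ - x)) := by
    intro x hx1 hx2
    have hu : 0 < t₀ + x := by linarith [mul_pos h1l1 ht₀pos]
    have hv : 0 < t₀ - x := by linarith [mul_pos h1l2 ht₀pos]
    have S1 : Summable (fun n : ℤ => (n : ℂ) * c n *
        Complex.exp (Complex.I * n * Real.pi * κ * Real.log (t₀ + x)) * (((t₀ + x : ℝ) : ℂ))⁻¹) :=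
      (hgsum (t₀ + x)).mul_right _
    have S2 : Summable (fun n : ℤ => (n : ℂ) * c n *
        Complex.exp (Complex.I * n * Real.pi * κ * Real.log (bb * (t₀ - x))) *
          (((t₀ - x : ℝ) : ℂ))⁻¹) :=
      (hgsum (bb * (t₀ - x))).mul_right _
    have hucast : ((t₀ + x : ℝ) : ℂ) ≠ 0 := Complex.ofReal_ne_zero.mpr (ne_of_gt hu)
    have hvcast : ((t₀ - x : ℝ) : ℂ) ≠ 0 := Complex.ofReal_ne_zero.mpr (ne_of_gt hv)
    have hbbcast : ((bb : ℝ) : ℂ) ≠ 0 := Complex.ofReal_ne_zero.mpr (ne_of_gt hbbpos)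
    have hbvcast : ((bb * (t₀ - x) : ℝ) : ℂ) = ((bb : ℝ) : ℂ) * ((t₀ - x : ℝ) : ℂ) := by
      push_cast; ring
    constructor
    · have h1 := hΦx t₀ le_rfl x (le_of_lt hx1) (le_of_lt hx2)
      have hsum : (∑' n : ℤ, (n : ℂ) *
          (c n * Complex.exp (Complex.I * n * Real.pi * κ * Real.log (t₀ + x)) /
              ((t₀ + x : ℝ) : ℂ) +
           C n * Complex.exp (Complex.I * n * Real.pi * κ * Real.log (t₀ - x)) /
              ((t₀ - x : ℝ) : ℂ)))
          = Hf (t₀ + x) * ((t₀ + x : ℝ) : ℂ)⁻¹ + Hf (bb * (t₀ - x)) * ((t₀ - x : ℝ) : ℂ)⁻¹ := by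
        simp only [hHf]
        rw [← tsum_mul_right, ← tsum_mul_right, ← Summable.tsum_add S1 S2]
        apply tsum_congr
        intro n
        rw [hkeyI n (t₀ - x) hv]
        ring
      rw [hsum] at h1
      have h2 : ((a (t₀ + x) + bb * a (bb * (t₀ - x)) : ℝ) : ℂ)
          = Complex.I * Real.pi * κ * (Hf (t₀ + x) * ((t₀ + x : ℝ) : ℂ)⁻¹ +
            Hf (bb * (t₀ - x)) * ((t₀ - x : ℝ) : ℂ)⁻¹) := by
        rw [Complex.ofReal_add, Complex.ofReal_mul, hconjA (t₀ + x), hconjA (bb * (t₀ - x))]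
        simp only [hA]
        rw [hbvcast, obs_helper2 (Complex.I * (Real.pi : ℂ) * (κ : ℂ) * Hf (bb * (t₀ - x)))
          _ _ hbbcast, div_eq_mul_inv]
        ring
      exact_mod_cast h1.trans h2.symm
    · have h1 := hΦt t₀ le_rfl x (le_of_lt hx1) (le_of_lt hx2)
      have hsum : (∑' n : ℤ, (n : ℂ) *
          (c n * Complex.exp (Complex.I * n * Real.pi * κ * Real.log (t₀ + x)) /
              ((t₀ + x : ℝ) : ℂ) -
           C n * Complex.exp (Complex.I * n * Real.pi * κ * Real.log (t₀ - x)) /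
              ((t₀ - x : ℝ) : ℂ)))
          = Hf (t₀ + x) * ((t₀ + x : ℝ) : ℂ)⁻¹ - Hf (bb * (t₀ - x)) * ((t₀ - x : ℝ) : ℂ)⁻¹ := by
        simp only [hHf]
        rw [← tsum_mul_right, ← tsum_mul_right, ← Summable.tsum_sub S1 S2]
        apply tsum_congr
        intro n
        rw [hkeyI n (t₀ - x) hv]
        ring
      rw [hsum] at h1
      have h2 : ((a (t₀ + x) - bb * a (bb * (t₀ - x)) : ℝ) : ℂ)
          = Complex.I * Real.pi * κ * (Hf (t₀ + x) * ((t₀ + x : ℝ) : ℂ)⁻¹ -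
            Hf (bb * (t₀ - x)) * ((t₀ - x : ℝ) : ℂ)⁻¹) := by
        rw [Complex.ofReal_sub, Complex.ofReal_mul, hconjA (t₀ + x), hconjA (bb * (t₀ - x))]
        simp only [hA]
        rw [hbvcast, obs_helper2 (Complex.I * (Real.pi : ℂ) * (κ : ℂ) * Hf (bb * (t₀ - x)))
          _ _ hbbcast, div_eq_mul_inv]
        ring
      exact_mod_cast h1.trans h2.symm
  -- the energy identity
  have hab : -ℓ₁ * t₀ ≤ ℓ₂ * t₀ :=
    le_trans (by simpa using neg_nonpos.mpr (mul_nonneg hℓ₁ ht₀pos.le) : -ℓ₁ * t₀ ≤ 0)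
      (mul_nonneg hℓ₂ ht₀pos.le)
  have hbbsolve : bb * (1 - ℓ₂) = 1 + ℓ₂ := by
    rw [hbb, div_mul_cancel₀ _ (ne_of_gt h1l2)]
  have hintE1 : IntervalIntegrable (fun x => a (t₀ + x) ^ 2) volume (-ℓ₁ * t₀) (ℓ₂ * t₀) := by
    apply ContinuousOn.intervalIntegrable
    apply hacont.comp ((continuous_const.add continuous_id).continuousOn)
    intro x hx
    have hx1 : min (-ℓ₁ * t₀) (ℓ₂ * t₀) ≤ x := hx.1
    rw [min_eq_left hab] at hx1
    have : 0 < t₀ + x := by linarith [mul_pos h1l1 ht₀pos]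
    exact ne_of_gt this
  have hintE2 : IntervalIntegrable (fun x => a (bb * t₀ - bb * x) ^ 2) volume
      (-ℓ₁ * t₀) (ℓ₂ * t₀) := by
    apply ContinuousOn.intervalIntegrable
    apply hacont.comp ((continuous_const.sub (continuous_const.mul continuous_id)).continuousOn)
    intro x hx
    have hx2 : x ≤ max (-ℓ₁ * t₀) (ℓ₂ * t₀) := hx.2
    rw [max_eq_right hab] at hx2
    have : 0 < bb * t₀ - bb * x := by
      linarith [mul_pos hbbpos (mul_pos h1l2 ht₀pos), mul_nonneg hbbpos.le (by linarith : (0:ℝ) ≤ ℓ₂ * t₀ - x)]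
    exact ne_of_gt this
  have hEeq : E t₀ = (∫ u in ((1 - ℓ₁) * t₀)..((1 + ℓ₂) * t₀), a u ^ 2)
      + bb * ∫ u in ((1 + ℓ₂) * t₀)..(bb * ((1 + ℓ₁) * t₀)), a u ^ 2 := by
    rw [hE t₀]
    rw [setIntegral_congr_fun measurableSet_Ioo
      (show Set.EqOn (fun x => Φx x t₀ ^ 2 + Φt x t₀ ^ 2)
        (fun x => 2 * a (t₀ + x) ^ 2 + 2 * bb ^ 2 * a (bb * t₀ - bb * x) ^ 2)
        (Set.Ioo (-ℓ₁ * t₀) (ℓ₂ * t₀)) from ?_)]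
    · rw [← MeasureTheory.integral_Ioc_eq_integral_Ioo, ← intervalIntegral.integral_of_le hab]
      rw [intervalIntegral.integral_add (hintE1.const_mul 2) (hintE2.const_mul (2 * bb ^ 2))]
      rw [intervalIntegral.integral_const_mul, intervalIntegral.integral_const_mul]
      have e1 : (∫ x in (-ℓ₁ * t₀)..(ℓ₂ * t₀), a (t₀ + x) ^ 2)
          = ∫ u in ((1 - ℓ₁) * t₀)..((1 + ℓ₂) * t₀), a u ^ 2 := by
        rw [intervalIntegral.integral_comp_add_left (fun u => a u ^ 2) t₀]
        congr 1 <;> ring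
      have e2 : (∫ x in (-ℓ₁ * t₀)..(ℓ₂ * t₀), a (bb * t₀ - bb * x) ^ 2)
          = bb⁻¹ * ∫ u in ((1 + ℓ₂) * t₀)..(bb * ((1 + ℓ₁) * t₀)), a u ^ 2 := by
        rw [intervalIntegral.integral_comp_sub_mul (fun u => a u ^ 2) (ne_of_gt hbbpos) (bb * t₀)]
        rw [smul_eq_mul]
        congr 2
        · linear_combination t₀ * hbbsolve
        · ring
      rw [e1, e2]
      field_simp
    · intro x hx
      obtain ⟨h1, h2⟩ := hintid x hx.1 hx.2
      simp only
      rw [h1, h2, show bb * (t₀ - x) = bb * t₀ - bb * x by ring]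
      ring
  -- the boundary integral identity
  have htT : t₀ ≤ t₀ + T := by linarith
  have hintB1 : IntervalIntegrable (fun t => a ((1 - ℓ₁) * t) ^ 2) volume t₀ (t₀ + T) := by
    apply ContinuousOn.intervalIntegrable
    apply hacont.comp ((continuous_const.mul continuous_id).continuousOn)
    intro t htmem
    have h1 : min t₀ (t₀ + T) ≤ t := htmem.1
    rw [min_eq_left htT] at h1
    exact ne_of_gt (mul_pos h1l1 (lt_of_lt_of_le ht₀pos h1))
  have hintB2 : IntervalIntegrable (fun t => a ((1 + ℓ₂) * t) ^ 2) volume t₀ (t₀ + T) := by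
    apply ContinuousOn.intervalIntegrable
    apply hacont.comp ((continuous_const.mul continuous_id).continuousOn)
    intro t htmem
    have h1 : min t₀ (t₀ + T) ≤ t := htmem.1
    rw [min_eq_left htT] at h1
    exact ne_of_gt (mul_pos h1p2 (lt_of_lt_of_le ht₀pos h1))
  have hSeq : (∫ t in Set.Ioo t₀ (t₀ + T), ((Φx (-ℓ₁ * t) t) ^ 2 + (Φx (ℓ₂ * t) t) ^ 2))
      = (2 / (1 + ℓ₁)) ^ 2 * ((1 - ℓ₁)⁻¹ *
          ∫ u in ((1 - ℓ₁) * t₀)..((1 - ℓ₁) * (t₀ + T)), a u ^ 2)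
        + (2 / (1 - ℓ₂)) ^ 2 * ((1 + ℓ₂)⁻¹ *
          ∫ u in ((1 + ℓ₂) * t₀)..((1 + ℓ₂) * (t₀ + T)), a u ^ 2) := by
    rw [setIntegral_congr_fun measurableSet_Ioo
      (show Set.EqOn (fun t => (Φx (-ℓ₁ * t) t) ^ 2 + (Φx (ℓ₂ * t) t) ^ 2)
        (fun t => (2 / (1 + ℓ₁)) ^ 2 * a ((1 - ℓ₁) * t) ^ 2
          + (2 / (1 - ℓ₂)) ^ 2 * a ((1 + ℓ₂) * t) ^ 2)
        (Set.Ioo t₀ (t₀ + T)) from ?_)]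
    · rw [← MeasureTheory.integral_Ioc_eq_integral_Ioo, ← intervalIntegral.integral_of_le htT]
      rw [intervalIntegral.integral_add (hintB1.const_mul _) (hintB2.const_mul _)]
      rw [intervalIntegral.integral_const_mul, intervalIntegral.integral_const_mul]
      rw [intervalIntegral.integral_comp_mul_left (fun u => a u ^ 2) (ne_of_gt h1l1)]
      rw [intervalIntegral.integral_comp_mul_left (fun u => a u ^ 2) (ne_of_gt h1p2)]
      rw [smul_eq_mul, smul_eq_mul]
    · intro t htmem
      simp only
      rw [htrL t (le_of_lt htmem.1), htrR t (le_of_lt htmem.1)]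
      ring
  -- comparing the integrals
  have hqP : (1 + ℓ₂) * t₀ ≤ (1 - ℓ₁) * (t₀ + T) := by
    have hb' : β * (1 - ℓ₁) = 1 + ℓ₂ := by
      rw [hβ, div_mul_cancel₀ _ (ne_of_gt h1l1)]
    have hb't : (1 + ℓ₂) * t₀ = β * ((1 - ℓ₁) * t₀) := by linear_combination t₀ * hb'.symm
    linarith [hb't, mul_le_mul_of_nonneg_right hMβ (mul_nonneg h1l1.le ht₀pos.le),
      mul_le_mul_of_nonneg_left hT h1l1.le]
  have hrQ : bb * ((1 + ℓ₁) * t₀) ≤ (1 + ℓ₂) * (t₀ + T) := by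
    have hb' : bb * (1 + ℓ₁) = α * (1 + ℓ₂) := by
      rw [hbb, hα]; field_simp
    have hb't : bb * ((1 + ℓ₁) * t₀) = α * ((1 + ℓ₂) * t₀) := by linear_combination t₀ * hb'
    linarith [hb't, mul_le_mul_of_nonneg_right hMα (mul_nonneg h1p2.le ht₀pos.le),
      mul_le_mul_of_nonneg_left hT h1p2.le]
  have hpq : (1 - ℓ₁) * t₀ ≤ (1 + ℓ₂) * t₀ :=
    mul_le_mul_of_nonneg_right (by linarith) ht₀pos.le
  have hqr : (1 + ℓ₂) * t₀ ≤ bb * ((1 + ℓ₁) * t₀) := by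
    have h1 : 1 + ℓ₂ ≤ bb := by
      rw [hbb, le_div_iff₀ h1l2]; linarith [sq_nonneg ℓ₂]
    have h2 := mul_le_mul_of_nonneg_right h1 (by positivity : (0:ℝ) ≤ (1 + ℓ₁) * t₀)
    linarith [mul_nonneg (mul_nonneg hℓ₁ h1p2.le) ht₀pos.le]
  have hppos : 0 < (1 - ℓ₁) * t₀ := by positivity
  have hqpos : 0 < (1 + ℓ₂) * t₀ := by positivity
  have hrpos : 0 < bb * ((1 + ℓ₁) * t₀) := by positivity
  have hPpos : 0 < (1 - ℓ₁) * (t₀ + T) := mul_pos h1l1 (by linarith)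
  have hQpos : 0 < (1 + ℓ₂) * (t₀ + T) := mul_pos h1p2 (by linarith)
  have hsplit1 : (∫ u in ((1 - ℓ₁) * t₀)..((1 + ℓ₂) * t₀), a u ^ 2)
      + (∫ u in ((1 + ℓ₂) * t₀)..((1 - ℓ₁) * (t₀ + T)), a u ^ 2)
      = ∫ u in ((1 - ℓ₁) * t₀)..((1 - ℓ₁) * (t₀ + T)), a u ^ 2 :=
    intervalIntegral.integral_add_adjacent_intervals
      (haint _ _ hppos hqpos) (haint _ _ hqpos hPpos)
  have hsplit2 : (∫ u in ((1 + ℓ₂) * t₀)..(bb * ((1 + ℓ₁) * t₀)), a u ^ 2)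
      + (∫ u in (bb * ((1 + ℓ₁) * t₀))..((1 + ℓ₂) * (t₀ + T)), a u ^ 2)
      = ∫ u in ((1 + ℓ₂) * t₀)..((1 + ℓ₂) * (t₀ + T)), a u ^ 2 :=
    intervalIntegral.integral_add_adjacent_intervals
      (haint _ _ hqpos hrpos) (haint _ _ hrpos hQpos)
  have hJ1 : 0 ≤ ∫ u in ((1 - ℓ₁) * t₀)..((1 + ℓ₂) * t₀), a u ^ 2 :=
    intervalIntegral.integral_nonneg hpq fun u _ => sq_nonneg _
  have hJ2 : 0 ≤ ∫ u in ((1 + ℓ₂) * t₀)..(bb * ((1 + ℓ₁) * t₀)), a u ^ 2 :=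
    intervalIntegral.integral_nonneg hqr fun u _ => sq_nonneg _
  have hrem1 : 0 ≤ ∫ u in ((1 + ℓ₂) * t₀)..((1 - ℓ₁) * (t₀ + T)), a u ^ 2 :=
    intervalIntegral.integral_nonneg hqP fun u _ => sq_nonneg _
  have hrem2 : 0 ≤ ∫ u in (bb * ((1 + ℓ₁) * t₀))..((1 + ℓ₂) * (t₀ + T)), a u ^ 2 :=
    intervalIntegral.integral_nonneg hrQ fun u _ => sq_nonneg _
  have hI1 : (∫ u in ((1 - ℓ₁) * t₀)..((1 + ℓ₂) * t₀), a u ^ 2)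
      ≤ ∫ u in ((1 - ℓ₁) * t₀)..((1 - ℓ₁) * (t₀ + T)), a u ^ 2 := by
    rw [← hsplit1]; linarith
  have hI2 : (∫ u in ((1 + ℓ₂) * t₀)..(bb * ((1 + ℓ₁) * t₀)), a u ^ 2)
      ≤ ∫ u in ((1 + ℓ₂) * t₀)..((1 + ℓ₂) * (t₀ + T)), a u ^ 2 := by
    rw [← hsplit2]; linarith
  -- coefficient inequalities
  have hMα' : 1 + ℓ₁ ≤ M * (1 - ℓ₂) := by
    have := hMα
    rw [hα, div_le_iff₀ h1l2] at this
    linarith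
  have hMβ' : 1 + ℓ₂ ≤ M * (1 - ℓ₁) := by
    have := hMβ
    rw [hβ, div_le_iff₀ h1l1] at this
    linarith
  have hKc1 : 1 ≤ (1 - l ^ 2) ^ 2 * M / (4 * (1 - L)) * ((2 / (1 + ℓ₁)) ^ 2 * (1 - ℓ₁)⁻¹) := by
    have hval : (1 - l ^ 2) ^ 2 * M / (4 * (1 - L)) * ((2 / (1 + ℓ₁)) ^ 2 * (1 - ℓ₁)⁻¹)
        = ((1 - l ^ 2) ^ 2 * M) / ((1 - L) * ((1 + ℓ₁) ^ 2 * (1 - ℓ₁))) := by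
      field_simp
      ring
    rw [hval, le_div_iff₀ (by positivity)]
    rcases le_total ℓ₁ ℓ₂ with h | h
    · rw [hl, hL, min_eq_left h, max_eq_right h]
      have haux1 : (1 - ℓ₂) ^ 2 ≤ 1 - ℓ₁ ^ 2 := by
        linarith [mul_self_le_mul_self hℓ₁ h, mul_nonneg hℓ₂ h1l2.le]
      have haux2 : (1 * ((1 - ℓ₂) * ((1 + ℓ₁) ^ 2 * (1 - ℓ₁)))) * (1 - ℓ₂)
          ≤ ((1 - ℓ₁ ^ 2) ^ 2 * M) * (1 - ℓ₂) := by
        linarith [mul_le_mul_of_nonneg_left haux1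
          (show (0:ℝ) ≤ (1 + ℓ₁) ^ 2 * (1 - ℓ₁) by positivity),
          mul_le_mul_of_nonneg_left hMα' (show (0:ℝ) ≤ (1 - ℓ₁ ^ 2) ^ 2 by positivity)]
      exact (mul_le_mul_iff_of_pos_right h1l2).mp haux2
    · rw [hl, hL, min_eq_right h, max_eq_left h]
      have haux1 : 1 - ℓ₁ ^ 2 ≤ 1 - ℓ₂ ^ 2 := by
        linarith [mul_self_le_mul_self hℓ₂ h]
      have hsqle : (1 - ℓ₁ ^ 2) * (1 - ℓ₁ ^ 2) ≤ (1 - ℓ₂ ^ 2) * (1 - ℓ₂ ^ 2) :=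
        mul_le_mul haux1 haux1 hsq1 (by linarith)
      linarith [hsqle,
        mul_le_mul_of_nonneg_left hM1.le (show (0:ℝ) ≤ (1 - ℓ₂ ^ 2) ^ 2 by positivity)]
  have hKc2 : bb ≤ (1 - l ^ 2) ^ 2 * M / (4 * (1 - L)) * ((2 / (1 - ℓ₂)) ^ 2 * (1 + ℓ₂)⁻¹) := by
    have hval : (1 - l ^ 2) ^ 2 * M / (4 * (1 - L)) * ((2 / (1 - ℓ₂)) ^ 2 * (1 + ℓ₂)⁻¹)
        = ((1 - l ^ 2) ^ 2 * M) / ((1 - L) * ((1 - ℓ₂) ^ 2 * (1 + ℓ₂))) := by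
      field_simp
      ring
    rw [hval, le_div_iff₀ (by positivity)]
    have hbd : bb * ((1 - L) * ((1 - ℓ₂) ^ 2 * (1 + ℓ₂))) = (1 - L) * ((1 - ℓ₂) * (1 + ℓ₂) ^ 2) := by
      rw [hbb]
      field_simp
    rw [hbd]
    rcases le_total ℓ₁ ℓ₂ with h | h
    · rw [hl, hL, min_eq_left h, max_eq_right h]
      have haux1 : 1 - ℓ₂ ^ 2 ≤ 1 - ℓ₁ ^ 2 := by
        linarith [mul_self_le_mul_self hℓ₁ h]
      have hsqle : (1 - ℓ₂ ^ 2) * (1 - ℓ₂ ^ 2) ≤ (1 - ℓ₁ ^ 2) * (1 - ℓ₁ ^ 2) :=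
        mul_le_mul haux1 haux1 hsq2 (by linarith)
      linarith [hsqle,
        mul_le_mul_of_nonneg_left hM1.le (show (0:ℝ) ≤ (1 - ℓ₁ ^ 2) ^ 2 by positivity)]
    · rw [hl, hL, min_eq_right h, max_eq_left h]
      have haux1 : (1 - ℓ₁) ^ 2 ≤ 1 - ℓ₂ ^ 2 := by
        linarith [mul_self_le_mul_self hℓ₂ h, mul_nonneg hℓ₁ h1l1.le]
      have haux2 : ((1 - ℓ₁) * ((1 - ℓ₂) * (1 + ℓ₂) ^ 2)) * (1 - ℓ₁)
          ≤ ((1 - ℓ₂ ^ 2) ^ 2 * M) * (1 - ℓ₁) := by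
        linarith [mul_le_mul_of_nonneg_left haux1
          (show (0:ℝ) ≤ (1 - ℓ₂) * (1 + ℓ₂) ^ 2 by positivity),
          mul_le_mul_of_nonneg_left hMβ' (show (0:ℝ) ≤ (1 - ℓ₂ ^ 2) ^ 2 by positivity)]
      exact (mul_le_mul_iff_of_pos_right h1l1).mp haux2
  -- final assembly
  rw [hEeq, hSeq]
  have hK0 : 0 ≤ (1 - l ^ 2) ^ 2 * M / (4 * (1 - L)) := by positivity
  set J1 := ∫ u in ((1 - ℓ₁) * t₀)..((1 + ℓ₂) * t₀), a u ^ 2 with hJ1def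
  set J2 := ∫ u in ((1 + ℓ₂) * t₀)..(bb * ((1 + ℓ₁) * t₀)), a u ^ 2 with hJ2def
  set I1 := ∫ u in ((1 - ℓ₁) * t₀)..((1 - ℓ₁) * (t₀ + T)), a u ^ 2 with hI1def
  set I2 := ∫ u in ((1 + ℓ₂) * t₀)..((1 + ℓ₂) * (t₀ + T)), a u ^ 2 with hI2def
  have k1 : 1 * J1 ≤ ((1 - l ^ 2) ^ 2 * M / (4 * (1 - L)) * ((2 / (1 + ℓ₁)) ^ 2 * (1 - ℓ₁)⁻¹)) * I1 :=
    mul_le_mul hKc1 hI1 hJ1 (le_trans zero_le_one hKc1)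
  have k2 : bb * J2 ≤ ((1 - l ^ 2) ^ 2 * M / (4 * (1 - L)) * ((2 / (1 - ℓ₂)) ^ 2 * (1 + ℓ₂)⁻¹)) * I2 :=
    mul_le_mul hKc2 hI2 hJ2 (le_trans (le_of_lt hbbpos) hKc2)
  calc J1 + bb * J2
      ≤ ((1 - l ^ 2) ^ 2 * M / (4 * (1 - L)) * ((2 / (1 + ℓ₁)) ^ 2 * (1 - ℓ₁)⁻¹)) * I1
        + ((1 - l ^ 2) ^ 2 * M / (4 * (1 - L)) * ((2 / (1 - ℓ₂)) ^ 2 * (1 + ℓ₂)⁻¹)) * I2 := by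
        have := k1; linarith
    _ = (1 - l ^ 2) ^ 2 * M / (4 * (1 - L)) *
        ((2 / (1 + ℓ₁)) ^ 2 * ((1 - ℓ₁)⁻¹ * I1) + (2 / (1 - ℓ₂)) ^ 2 * ((1 + ℓ₂)⁻¹ * I2)) := by
        ring
end
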